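/- The function S₂(Q) = 1 − h(B(Q)) with B(Q) = 1/2 + (1/2)√(Q(1−3Q/2)) − (√2/4)(1−3Q) is nonincreasing on [0, 1/6], with S₂(0) = 1 − h(1/2 − √2/4) > 0 and S₂(1/6) = 0. -/
import Mathlib


/-- Binary entropy (in bits). -/
noncomputable def binEnt (x : ℝ) : ℝ := -(x * Real.logb 2 x) - (1 - x) * Real.logb 2 (1 - x)

/-- The SARG two-photon phase-error bound. -/
noncomputable def Bsarg (Q : ℝ) : ℝ :=
  1 / 2 + (1 / 2) * Real.sqrt (Q * (1 - 3 * Q / 2)) - (Real.sqrt 2 / 4) * (1 - 3 * Q)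

lemma binEnt_eq (x : ℝ) : binEnt x = Real.binEntropy x / Real.log 2 := by
  unfold binEnt Real.binEntropy Real.logb
  rw [Real.log_inv, Real.log_inv]
  ring

lemma sqrt2_pos : 0 < Real.sqrt 2 := Real.sqrt_pos.mpr (by norm_num)

lemma sqrt2_le_two : Real.sqrt 2 ≤ 2 := by
  nlinarith [Real.sq_sqrt (show (0:ℝ) ≤ 2 by norm_num), Real.sqrt_nonneg 2]

lemma Bsarg_zero : Bsarg 0 = 1 / 2 - Real.sqrt 2 / 4 := by
  simp [Bsarg]

lemma Bsarg_sixth : Bsarg (1 / 6) = 1 / 2 := by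
  have h1 : Real.sqrt ((1/6 : ℝ) * (1 - 3 * (1/6) / 2)) = Real.sqrt 2 / 4 := by
    have h2 : ((Real.sqrt 2) / 4) ^ 2 = (1/6 : ℝ) * (1 - 3 * (1/6) / 2) := by
      nlinarith [Real.sq_sqrt (show (0:ℝ) ≤ 2 by norm_num)]
    rw [← h2, Real.sqrt_sq (by positivity)]
  unfold Bsarg
  rw [h1]; ring

lemma Bsarg_mono {a b : ℝ} (ha : 0 ≤ a) (hb : b ≤ 1/6) (hab : a ≤ b) :
    Bsarg a ≤ Bsarg b := by
  have hs : Real.sqrt (a * (1 - 3 * a / 2)) ≤ Real.sqrt (b * (1 - 3 * b / 2)) :=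
    Real.sqrt_le_sqrt (by nlinarith)
  have h2 : 0 ≤ Real.sqrt 2 * (b - a) :=
    mul_nonneg (Real.sqrt_nonneg 2) (sub_nonneg.2 hab)
  unfold Bsarg
  nlinarith

/-- Eve's minimal uncertainty on two-photon SARG pulses, `S₂(Q) = 1 − h(B(Q))`, is
nonincreasing on `[0, 1/6]`, with `S₂(0) = 1 − h(1/2 − √2/4) > 0` and `S₂(1/6) = 0`. -/
theorem sarg_two_photon_uncertainty_properties :
    AntitoneOn (fun Q => 1 - binEnt (Bsarg Q)) (Set.Icc (0 : ℝ) (1 / 6)) ∧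
    1 - binEnt (Bsarg 0) = 1 - binEnt (1 / 2 - Real.sqrt 2 / 4) ∧
    0 < 1 - binEnt (Bsarg 0) ∧
    1 - binEnt (Bsarg (1 / 6)) = 0 := by
  have hlog2 : 0 < Real.log 2 := Real.log_pos (by norm_num)
  have hB0 : (0:ℝ) ≤ 1/2 - Real.sqrt 2 / 4 := by nlinarith [sqrt2_le_two]
  have hmem : ∀ Q ∈ Set.Icc (0:ℝ) (1/6), Bsarg Q ∈ Set.Icc (0:ℝ) 2⁻¹ := by
    intro Q hQ
    obtain ⟨h0, h6⟩ := hQ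
    constructor
    · have := Bsarg_mono le_rfl h6 h0
      rw [Bsarg_zero] at this; linarith
    · have := Bsarg_mono h0 le_rfl h6
      rw [Bsarg_sixth] at this
      simpa using this
  refine ⟨?_, ?_, ?_, ?_⟩
  · intro a ha b hb hab
    have h1 : Real.binEntropy (Bsarg a) ≤ Real.binEntropy (Bsarg b) :=
      Real.binEntropy_strictMonoOn.monotoneOn (hmem a ha) (hmem b hb)
        (Bsarg_mono ha.1 hb.2 hab)
    simp only [binEnt_eq]
    gcongr
  · rw [Bsarg_zero]
  · rw [Bsarg_zero, binEnt_eq]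
    have hne : (1:ℝ)/2 - Real.sqrt 2 / 4 ≠ 2⁻¹ := by
      have := sqrt2_pos; intro h; nlinarith
    have := Real.binEntropy_lt_log_two.mpr hne
    rw [sub_pos, div_lt_one hlog2]
    exact this
  · rw [Bsarg_sixth, binEnt_eq]
    have : (1:ℝ)/2 = 2⁻¹ := by norm_num
    rw [this, Real.binEntropy_two_inv, div_self hlog2.ne']
    ring
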